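/- Let n ≥ 1 and let D be any subset of the distinguished vertices {a₀,…,a_n, b₀,…,b_n} of the graph G_n. For 0 ≤ j ≤ n define t_j = 1 if neither a_j nor b_j lies in D, t_j = −1 if both a_j and b_j lie in D, and t_j = 0 if exactly one of them lies in D. Then the number of perfect matchings of the induced subgraph of G_n obtained by deleting the vertices of D equals 2^{#{j : t_j = 1}} if the sequence (t₀,…,t_n) satisfies that every partial sum t₀ + ⋯ + t_m (0 ≤ m ≤ n) equals 0 or 1 and the total sum t₀ + ⋯ + t_n equals 1 (equivalently, the nonzero t_j alternate in sign beginning and ending with +1), and it equals 0 otherwise. -/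

import Mathlib

/-- The number of perfect matchings of a simple graph `G`: the number of subsets `E'`
of the edge set such that every vertex is incident to exactly one edge of `E'`. -/
noncomputable def numPM {V : Type*} (G : SimpleGraph V) : ℕ :=
  Set.ncard {E' : Set (Sym2 V) | E' ⊆ G.edgeSet ∧ ∀ v : V, ∃! e ∈ E', v ∈ e}

/-- Vertices of the graph `Gₙ`: distinguished vertices `a 0, …, a n`, `b 0, …, b n`,
inner vertices `c 1, …, c n` (here `c i` for `i : Fin n` stands for `c (i+1)`),
and the two cap vertices `w` and `w'`. -/
inductive GnV (n : ℕ) where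
  | a (i : Fin (n + 1))
  | b (i : Fin (n + 1))
  | c (i : Fin n)
  | w
  | w'

/-- The edge relation of `Gₙ`: `w–a₀`, `w–b₀`, `w'–aₙ`, `w'–bₙ`, and for each
`1 ≤ i ≤ n` the four edges `cᵢ–a_{i−1}`, `cᵢ–b_{i−1}`, `cᵢ–aᵢ`, `cᵢ–bᵢ`. -/
def GnRel (n : ℕ) : GnV n → GnV n → Prop := fun u v =>
  (u = GnV.w ∧ (v = GnV.a 0 ∨ v = GnV.b 0)) ∨
  (u = GnV.w' ∧ (v = GnV.a (Fin.last n) ∨ v = GnV.b (Fin.last n))) ∨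
  (∃ i : Fin n, u = GnV.c i ∧
    (v = GnV.a i.castSucc ∨ v = GnV.b i.castSucc ∨ v = GnV.a i.succ ∨ v = GnV.b i.succ))

/-- The graph `Gₙ` (one row of the Aztec diamond dual graph with its end caps). -/
def GnGraph (n : ℕ) : SimpleGraph (GnV n) := SimpleGraph.fromRel (GnRel n)

deriving instance DecidableEq for GnV

namespace GnAux
variable {n : ℕ}
def L (j : Fin (n+1)) : GnV n :=
  if h : (j : ℕ) = 0 then GnV.w else GnV.c ⟨(j:ℕ) - 1, by have := j.isLt; omega⟩
def R (j : Fin (n+1)) : GnV n :=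
  if h : (j : ℕ) = n then GnV.w' else GnV.c ⟨(j:ℕ), by have := j.isLt; omega⟩

lemma rel_snd {u v : GnV n} (h : GnRel n u v) : ∃ j, v = GnV.a j ∨ v = GnV.b j := by
  rcases h with ⟨_, h | h⟩ | ⟨_, h | h⟩ | ⟨i, _, h | h | h | h⟩ <;>
    first | exact ⟨_, Or.inl h⟩ | exact ⟨_, Or.inr h⟩

lemma adj_struct {u v : GnV n} (h : (GnGraph n).Adj u v) :
    (∃ j, u = GnV.a j ∨ u = GnV.b j) ∨ (∃ j, v = GnV.a j ∨ v = GnV.b j) := by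
  rw [GnGraph, SimpleGraph.fromRel_adj] at h
  rcases h.2 with h | h
  · exact Or.inr (rel_snd h)
  · exact Or.inl (rel_snd h)

lemma adj_a (j : Fin (n+1)) (u : GnV n) :
    (GnGraph n).Adj (GnV.a j) u ↔ u = L j ∨ u = R j := by
  rw [GnGraph, SimpleGraph.fromRel_adj]
  constructor
  · rintro ⟨hne, h | h⟩
    · rcases h with ⟨h,_⟩|⟨h,_⟩|⟨i,h,_⟩ <;> simp at h
    · rcases h with ⟨hw, hv | hv⟩ | ⟨hw', hv | hv⟩ | ⟨i, hc, hv | hv | hv | hv⟩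
      · rw [GnV.a.injEq] at hv; subst hw hv; left; unfold L; simp
      · exact absurd hv (by simp)
      · rw [GnV.a.injEq] at hv; subst hw' hv; right; unfold R; simp [Fin.last]
      · exact absurd hv (by simp)
      · rw [GnV.a.injEq] at hv; subst hc hv; right; unfold R
        have hi := i.isLt
        rw [dif_neg (by simp only [Fin.coe_castSucc]; omega)]
        congr 1
      · exact absurd hv (by simp)
      · rw [GnV.a.injEq] at hv; subst hc hv; left; unfold L
        rw [dif_neg (by simp)]
        congr 1; try exact Fin.ext (by simp)
      · exact absurd hv (by simp)
  · rintro (h | h) <;> subst h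
    · refine ⟨(by unfold L; split <;> simp), Or.inr ?_⟩
      unfold L; split
      · exact Or.inl ⟨rfl, Or.inl (by congr 1; exact Fin.ext (by assumption))⟩
      · exact Or.inr (Or.inr ⟨_, rfl, Or.inr (Or.inr (Or.inl
          (by congr 1; exact Fin.ext (by simp only [Fin.val_succ]; omega))))⟩)
    · refine ⟨(by unfold R; split <;> simp), Or.inr ?_⟩
      unfold R; split
      · exact Or.inr (Or.inl ⟨rfl, Or.inl (by congr 1; exact Fin.ext (by assumption))⟩)
      · exact Or.inr (Or.inr ⟨_, rfl, Or.inl (by congr 1)⟩)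

lemma adj_b (j : Fin (n+1)) (u : GnV n) :
    (GnGraph n).Adj (GnV.b j) u ↔ u = L j ∨ u = R j := by
  rw [GnGraph, SimpleGraph.fromRel_adj]
  constructor
  · rintro ⟨hne, h | h⟩
    · rcases h with ⟨h,_⟩|⟨h,_⟩|⟨i,h,_⟩ <;> simp at h
    · rcases h with ⟨hw, hv | hv⟩ | ⟨hw', hv | hv⟩ | ⟨i, hc, hv | hv | hv | hv⟩
      · exact absurd hv (by simp)
      · rw [GnV.b.injEq] at hv; subst hw hv; left; unfold L; simp
      · exact absurd hv (by simp)
      · rw [GnV.b.injEq] at hv; subst hw' hv; right; unfold R; simp [Fin.last]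
      · exact absurd hv (by simp)
      · rw [GnV.b.injEq] at hv; subst hc hv; right; unfold R
        have hi := i.isLt
        rw [dif_neg (by simp only [Fin.coe_castSucc]; omega)]
        congr 1
      · exact absurd hv (by simp)
      · rw [GnV.b.injEq] at hv; subst hc hv; left; unfold L
        rw [dif_neg (by simp)]
        congr 1; try exact Fin.ext (by simp)
  · rintro (h | h) <;> subst h
    · refine ⟨(by unfold L; split <;> simp), Or.inr ?_⟩
      unfold L; split
      · exact Or.inl ⟨rfl, Or.inr (by congr 1; exact Fin.ext (by assumption))⟩
      · exact Or.inr (Or.inr ⟨_, rfl, Or.inr (Or.inr (Or.inr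
          (by congr 1; exact Fin.ext (by simp only [Fin.val_succ]; omega))))⟩)
    · refine ⟨(by unfold R; split <;> simp), Or.inr ?_⟩
      unfold R; split
      · exact Or.inr (Or.inl ⟨rfl, Or.inr (by congr 1; exact Fin.ext (by assumption))⟩)
      · exact Or.inr (Or.inr ⟨_, rfl, Or.inr (Or.inl (by congr 1))⟩)

def pt (x : Bool) (j : Fin (n+1)) : GnV n := if x then R j else L j
lemma L_ne_a (j k : Fin (n+1)) : L j ≠ GnV.a k := by unfold L; split <;> simp
lemma L_ne_b (j k : Fin (n+1)) : L j ≠ GnV.b k := by unfold L; split <;> simp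
lemma R_ne_a (j k : Fin (n+1)) : R j ≠ GnV.a k := by unfold R; split <;> simp
lemma R_ne_b (j k : Fin (n+1)) : R j ≠ GnV.b k := by unfold R; split <;> simp
lemma pt_ne_a (x : Bool) (j k : Fin (n+1)) : pt x j ≠ GnV.a k := by
  unfold pt; cases x <;> simp [L_ne_a, R_ne_a]
lemma pt_ne_b (x : Bool) (j k : Fin (n+1)) : pt x j ≠ GnV.b k := by
  unfold pt; cases x <;> simp [L_ne_b, R_ne_b]
lemma L_ne_R (j : Fin (n+1)) : L j ≠ R j := by
  unfold L R; split <;> split <;> simp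
  omega
lemma R_eq_c_iff (j : Fin (n+1)) (i : Fin n) : R j = GnV.c i ↔ j = i.castSucc := by
  unfold R; split <;> simp [Fin.ext_iff] <;> omega
lemma L_eq_c_iff (j : Fin (n+1)) (i : Fin n) : L j = GnV.c i ↔ j = i.succ := by
  unfold L; split <;> simp [Fin.ext_iff] <;> omega
lemma L_eq_w_iff (j : Fin (n+1)) : L j = GnV.w ↔ j = 0 := by
  unfold L; split <;> simp only [Fin.ext_iff, Fin.val_zero, reduceCtorEq, iff_true, iff_false, true_iff, false_iff] <;> omega
lemma R_eq_w'_iff (j : Fin (n+1)) : R j = GnV.w' ↔ j = Fin.last n := by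
  unfold R; split <;> simp [Fin.ext_iff, Fin.last] <;> omega
lemma L_ne_w' (j : Fin (n+1)) : L j ≠ GnV.w' := by unfold L; split <;> simp
lemma R_ne_w (j : Fin (n+1)) : R j ≠ GnV.w := by unfold R; split <;> simp

lemma adj_pt (x : Bool) (j : Fin (n+1)) : (GnGraph n).Adj (GnV.a j) (pt x j) := by
  rw [adj_a]; cases x <;> simp [pt]
lemma adj_ptb (x : Bool) (j : Fin (n+1)) : (GnGraph n).Adj (GnV.b j) (pt x j) := by
  rw [adj_b]; cases x <;> simp [pt]

variable (Da Db : Finset (Fin (n+1)))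

def S : Set (GnV n) := {v | ¬ ((∃ j ∈ Da, v = GnV.a j) ∨ (∃ j ∈ Db, v = GnV.b j))}

lemma a_mem_S {j : Fin (n+1)} : GnV.a j ∈ S Da Db ↔ j ∉ Da := by
  simp [S, eq_comm]
lemma b_mem_S {j : Fin (n+1)} : GnV.b j ∈ S Da Db ↔ j ∉ Db := by
  simp [S, eq_comm]
lemma c_mem_S {i : Fin n} : GnV.c i ∈ S Da Db := by simp [S]
lemma w_mem_S : GnV.w ∈ S Da Db := by simp [S]
lemma w'_mem_S : GnV.w' ∈ S Da Db := by simp [S]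

lemma pt_mem (x : Bool) (j : Fin (n+1)) : pt x j ∈ S Da Db := by
  unfold pt L R; split <;> split <;>
    first | exact w_mem_S Da Db | exact w'_mem_S Da Db | exact c_mem_S Da Db

def ME (α β : Fin (n+1) → Bool) : Set (Sym2 (S Da Db : Set (GnV n))) :=
  {e | (∃ j, ∃ h : GnV.a j ∈ S Da Db,
        e = s(⟨GnV.a j, h⟩, ⟨pt (α j) j, pt_mem Da Db _ _⟩)) ∨
       (∃ j, ∃ h : GnV.b j ∈ S Da Db,
        e = s(⟨GnV.b j, h⟩, ⟨pt (β j) j, pt_mem Da Db _ _⟩))}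

def lcnt (α β : Fin (n+1) → Bool) (j : Fin (n+1)) : ℕ :=
  (if j ∉ Da ∧ α j = false then 1 else 0) + (if j ∉ Db ∧ β j = false then 1 else 0)
def rcnt (α β : Fin (n+1) → Bool) (j : Fin (n+1)) : ℕ :=
  (if j ∉ Da ∧ α j = true then 1 else 0) + (if j ∉ Db ∧ β j = true then 1 else 0)

def Valid (α β : Fin (n+1) → Bool) : Prop :=
  (∀ j ∈ Da, α j = false) ∧ (∀ j ∈ Db, β j = false) ∧
  lcnt Da Db α β 0 = 1 ∧ rcnt Da Db α β (Fin.last n) = 1 ∧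
  ∀ i : Fin n, rcnt Da Db α β i.castSucc + lcnt Da Db α β i.succ = 1

def MSet : Set (Set (Sym2 (S Da Db : Set (GnV n)))) :=
  {E' | E' ⊆ ((GnGraph n).induce (S Da Db)).edgeSet ∧ ∀ v, ∃! e ∈ E', v ∈ e}
lemma exactly_one_of_four {p q r s : Prop} [Decidable p] [Decidable q] [Decidable r] [Decidable s]
    (h : ((if p then 1 else 0) + (if q then 1 else 0)) + ((if r then 1 else 0) + (if s then 1 else 0)) = 1) :
    (p ∧ ¬q ∧ ¬r ∧ ¬s) ∨ (¬p ∧ q ∧ ¬r ∧ ¬s) ∨ (¬p ∧ ¬q ∧ r ∧ ¬s) ∨ (¬p ∧ ¬q ∧ ¬r ∧ s) := by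
  split_ifs at h <;> first | omega | tauto

lemma exactly_one_of_two {p q : Prop} [Decidable p] [Decidable q]
    (h : (if p then 1 else 0) + (if q then 1 else 0) = 1) :
    (p ∧ ¬q) ∨ (¬p ∧ q) := by
  split_ifs at h <;> first | omega | tauto

lemma pt_eq_c_iff (x : Bool) (j : Fin (n+1)) (i : Fin n) :
    pt x j = GnV.c i ↔ (x = true ∧ j = i.castSucc) ∨ (x = false ∧ j = i.succ) := by
  cases x <;> simp [pt, L_eq_c_iff, R_eq_c_iff]

lemma pt_eq_w_iff (x : Bool) (j : Fin (n+1)) :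
    pt x j = GnV.w ↔ x = false ∧ j = 0 := by
  cases x <;> simp [pt, L_eq_w_iff, R_ne_w]

lemma pt_eq_w'_iff (x : Bool) (j : Fin (n+1)) :
    pt x j = GnV.w' ↔ x = true ∧ j = Fin.last n := by
  cases x <;> simp [pt, R_eq_w'_iff, L_ne_w']

lemma ME_subset {α β : Fin (n+1) → Bool} :
    ME Da Db α β ⊆ ((GnGraph n).induce (S Da Db)).edgeSet := by
  rintro e (⟨j, h, rfl⟩ | ⟨j, h, rfl⟩) <;> rw [SimpleGraph.mem_edgeSet]
  · exact adj_pt _ _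
  · exact adj_ptb _ _


lemma mem_ME_c {α β : Fin (n+1) → Bool} (i : Fin n) (hmem : GnV.c i ∈ S Da Db) :
    ∀ y ∈ ME Da Db α β,
      (⟨GnV.c i, hmem⟩ : (S Da Db : Set (GnV n))) ∈ y →
      ((i.castSucc ∉ Da ∧ α i.castSucc = true) ∧ ∃ h, y = s(⟨GnV.a i.castSucc, h⟩, ⟨pt (α i.castSucc) i.castSucc, pt_mem Da Db _ _⟩)) ∨
      ((i.castSucc ∉ Db ∧ β i.castSucc = true) ∧ ∃ h, y = s(⟨GnV.b i.castSucc, h⟩, ⟨pt (β i.castSucc) i.castSucc, pt_mem Da Db _ _⟩)) ∨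
      ((i.succ ∉ Da ∧ α i.succ = false) ∧ ∃ h, y = s(⟨GnV.a i.succ, h⟩, ⟨pt (α i.succ) i.succ, pt_mem Da Db _ _⟩)) ∨
      ((i.succ ∉ Db ∧ β i.succ = false) ∧ ∃ h, y = s(⟨GnV.b i.succ, h⟩, ⟨pt (β i.succ) i.succ, pt_mem Da Db _ _⟩)) := by
  rintro y (⟨j', h', rfl⟩ | ⟨j', h', rfl⟩) hy
  · rcases Sym2.mem_iff.1 hy with h | h
    · exact absurd (congrArg Subtype.val h) (by simp)
    · have h2 := (congrArg Subtype.val h).symm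
      rcases (pt_eq_c_iff _ _ _).1 h2 with ⟨hx, rfl⟩ | ⟨hx, rfl⟩
      · exact Or.inl ⟨⟨(a_mem_S Da Db).1 h', hx⟩, h', rfl⟩
      · exact Or.inr (Or.inr (Or.inl ⟨⟨(a_mem_S Da Db).1 h', hx⟩, h', rfl⟩))
  · rcases Sym2.mem_iff.1 hy with h | h
    · exact absurd (congrArg Subtype.val h) (by simp)
    · have h2 := (congrArg Subtype.val h).symm
      rcases (pt_eq_c_iff _ _ _).1 h2 with ⟨hx, rfl⟩ | ⟨hx, rfl⟩
      · exact Or.inr (Or.inl ⟨⟨(b_mem_S Da Db).1 h', hx⟩, h', rfl⟩)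
      · exact Or.inr (Or.inr (Or.inr ⟨⟨(b_mem_S Da Db).1 h', hx⟩, h', rfl⟩))

lemma mem_ME_w {α β : Fin (n+1) → Bool} (hmem : GnV.w ∈ S Da Db) :
    ∀ y ∈ ME Da Db α β,
      (⟨GnV.w, hmem⟩ : (S Da Db : Set (GnV n))) ∈ y →
      (((0 : Fin (n+1)) ∉ Da ∧ α 0 = false) ∧ ∃ h, y = s(⟨GnV.a 0, h⟩, ⟨pt (α 0) 0, pt_mem Da Db _ _⟩)) ∨
      (((0 : Fin (n+1)) ∉ Db ∧ β 0 = false) ∧ ∃ h, y = s(⟨GnV.b 0, h⟩, ⟨pt (β 0) 0, pt_mem Da Db _ _⟩)) := by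
  rintro y (⟨j', h', rfl⟩ | ⟨j', h', rfl⟩) hy
  · rcases Sym2.mem_iff.1 hy with h | h
    · exact absurd (congrArg Subtype.val h) (by simp)
    · have h2 := (congrArg Subtype.val h).symm
      obtain ⟨hx, rfl⟩ := (pt_eq_w_iff _ _).1 h2
      exact Or.inl ⟨⟨(a_mem_S Da Db).1 h', hx⟩, h', rfl⟩
  · rcases Sym2.mem_iff.1 hy with h | h
    · exact absurd (congrArg Subtype.val h) (by simp)
    · have h2 := (congrArg Subtype.val h).symm
      obtain ⟨hx, rfl⟩ := (pt_eq_w_iff _ _).1 h2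
      exact Or.inr ⟨⟨(b_mem_S Da Db).1 h', hx⟩, h', rfl⟩

lemma mem_ME_w' {α β : Fin (n+1) → Bool} (hmem : GnV.w' ∈ S Da Db) :
    ∀ y ∈ ME Da Db α β,
      (⟨GnV.w', hmem⟩ : (S Da Db : Set (GnV n))) ∈ y →
      ((Fin.last n ∉ Da ∧ α (Fin.last n) = true) ∧ ∃ h, y = s(⟨GnV.a (Fin.last n), h⟩, ⟨pt (α (Fin.last n)) (Fin.last n), pt_mem Da Db _ _⟩)) ∨
      ((Fin.last n ∉ Db ∧ β (Fin.last n) = true) ∧ ∃ h, y = s(⟨GnV.b (Fin.last n), h⟩, ⟨pt (β (Fin.last n)) (Fin.last n), pt_mem Da Db _ _⟩)) := by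
  rintro y (⟨j', h', rfl⟩ | ⟨j', h', rfl⟩) hy
  · rcases Sym2.mem_iff.1 hy with h | h
    · exact absurd (congrArg Subtype.val h) (by simp)
    · have h2 := (congrArg Subtype.val h).symm
      obtain ⟨hx, rfl⟩ := (pt_eq_w'_iff _ _).1 h2
      exact Or.inl ⟨⟨(a_mem_S Da Db).1 h', hx⟩, h', rfl⟩
  · rcases Sym2.mem_iff.1 hy with h | h
    · exact absurd (congrArg Subtype.val h) (by simp)
    · have h2 := (congrArg Subtype.val h).symm
      obtain ⟨hx, rfl⟩ := (pt_eq_w'_iff _ _).1 h2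
      exact Or.inr ⟨⟨(b_mem_S Da Db).1 h', hx⟩, h', rfl⟩

lemma ME_mem_MSet {α β : Fin (n+1) → Bool} (hv : Valid Da Db α β) :
    ME Da Db α β ∈ MSet Da Db := by
  obtain ⟨hna, hnb, h0, hlast, hmid⟩ := hv
  refine ⟨ME_subset Da Db, ?_⟩
  rintro ⟨vv, hmem⟩
  cases vv with
  | a j =>
    refine ⟨s(⟨GnV.a j, hmem⟩, ⟨pt (α j) j, pt_mem Da Db _ _⟩),
      ⟨Or.inl ⟨j, hmem, rfl⟩, Sym2.mem_mk_left _ _⟩, ?_⟩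
    rintro y ⟨(⟨j', h', rfl⟩ | ⟨j', h', rfl⟩), hy⟩
    · rcases Sym2.mem_iff.1 hy with h | h
      · obtain rfl : j = j' := by simpa using congrArg Subtype.val h
        rfl
      · exact absurd (congrArg Subtype.val h).symm (pt_ne_a _ _ _)
    · rcases Sym2.mem_iff.1 hy with h | h
      · exact absurd (congrArg Subtype.val h) (by simp)
      · exact absurd (congrArg Subtype.val h).symm (pt_ne_a _ _ _)
  | b j =>
    refine ⟨s(⟨GnV.b j, hmem⟩, ⟨pt (β j) j, pt_mem Da Db _ _⟩),
      ⟨Or.inr ⟨j, hmem, rfl⟩, Sym2.mem_mk_left _ _⟩, ?_⟩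
    rintro y ⟨(⟨j', h', rfl⟩ | ⟨j', h', rfl⟩), hy⟩
    · rcases Sym2.mem_iff.1 hy with h | h
      · exact absurd (congrArg Subtype.val h) (by simp)
      · exact absurd (congrArg Subtype.val h).symm (pt_ne_b _ _ _)
    · rcases Sym2.mem_iff.1 hy with h | h
      · obtain rfl : j = j' := by simpa using congrArg Subtype.val h
        rfl
      · exact absurd (congrArg Subtype.val h).symm (pt_ne_b _ _ _)
  | c i =>
    have hm := hmid i
    unfold rcnt lcnt at hm
    have key := exactly_one_of_four hm
    have hchar := mem_ME_c Da Db (α := α) (β := β) i hmem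
    rcases key with ⟨⟨hp1, hp2⟩, hq, hr, hs⟩ | ⟨hp, ⟨hq1, hq2⟩, hr, hs⟩ |
        ⟨hp, hq, ⟨hr1, hr2⟩, hs⟩ | ⟨hp, hq, hr, ⟨hs1, hs2⟩⟩
    · refine ⟨s(⟨GnV.a i.castSucc, (a_mem_S Da Db).2 hp1⟩, ⟨pt (α i.castSucc) i.castSucc, pt_mem Da Db _ _⟩),
        ⟨Or.inl ⟨_, _, rfl⟩, Sym2.mem_iff.2 (Or.inr (Subtype.ext
          (((pt_eq_c_iff _ _ _).2 (Or.inl ⟨hp2, rfl⟩)).symm)))⟩, ?_⟩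
      rintro y ⟨hy1, hy2⟩
      rcases hchar y hy1 hy2 with ⟨_, h, rfl⟩ | ⟨hc, _⟩ | ⟨hc, _⟩ | ⟨hc, _⟩
      · rfl
      · exact absurd hc hq
      · exact absurd hc hr
      · exact absurd hc hs
    · refine ⟨s(⟨GnV.b i.castSucc, (b_mem_S Da Db).2 hq1⟩, ⟨pt (β i.castSucc) i.castSucc, pt_mem Da Db _ _⟩),
        ⟨Or.inr ⟨_, _, rfl⟩, Sym2.mem_iff.2 (Or.inr (Subtype.ext
          (((pt_eq_c_iff _ _ _).2 (Or.inl ⟨hq2, rfl⟩)).symm)))⟩, ?_⟩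
      rintro y ⟨hy1, hy2⟩
      rcases hchar y hy1 hy2 with ⟨hc, _⟩ | ⟨_, h, rfl⟩ | ⟨hc, _⟩ | ⟨hc, _⟩
      · exact absurd hc hp
      · rfl
      · exact absurd hc hr
      · exact absurd hc hs
    · refine ⟨s(⟨GnV.a i.succ, (a_mem_S Da Db).2 hr1⟩, ⟨pt (α i.succ) i.succ, pt_mem Da Db _ _⟩),
        ⟨Or.inl ⟨_, _, rfl⟩, Sym2.mem_iff.2 (Or.inr (Subtype.ext
          (((pt_eq_c_iff _ _ _).2 (Or.inr ⟨hr2, rfl⟩)).symm)))⟩, ?_⟩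
      rintro y ⟨hy1, hy2⟩
      rcases hchar y hy1 hy2 with ⟨hc, _⟩ | ⟨hc, _⟩ | ⟨_, h, rfl⟩ | ⟨hc, _⟩
      · exact absurd hc hp
      · exact absurd hc hq
      · rfl
      · exact absurd hc hs
    · refine ⟨s(⟨GnV.b i.succ, (b_mem_S Da Db).2 hs1⟩, ⟨pt (β i.succ) i.succ, pt_mem Da Db _ _⟩),
        ⟨Or.inr ⟨_, _, rfl⟩, Sym2.mem_iff.2 (Or.inr (Subtype.ext
          (((pt_eq_c_iff _ _ _).2 (Or.inr ⟨hs2, rfl⟩)).symm)))⟩, ?_⟩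
      rintro y ⟨hy1, hy2⟩
      rcases hchar y hy1 hy2 with ⟨hc, _⟩ | ⟨hc, _⟩ | ⟨hc, _⟩ | ⟨_, h, rfl⟩
      · exact absurd hc hp
      · exact absurd hc hq
      · exact absurd hc hr
      · rfl
  | w =>
    unfold lcnt at h0
    have key := exactly_one_of_two h0
    have hchar := mem_ME_w Da Db (α := α) (β := β) hmem
    rcases key with ⟨⟨hp1, hp2⟩, hq⟩ | ⟨hp, ⟨hq1, hq2⟩⟩
    · refine ⟨s(⟨GnV.a 0, (a_mem_S Da Db).2 hp1⟩, ⟨pt (α 0) 0, pt_mem Da Db _ _⟩),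
        ⟨Or.inl ⟨_, _, rfl⟩, Sym2.mem_iff.2 (Or.inr (Subtype.ext
          (((pt_eq_w_iff _ _).2 ⟨hp2, rfl⟩).symm)))⟩, ?_⟩
      rintro y ⟨hy1, hy2⟩
      rcases hchar y hy1 hy2 with ⟨_, h, rfl⟩ | ⟨hc, _⟩
      · rfl
      · exact absurd hc hq
    · refine ⟨s(⟨GnV.b 0, (b_mem_S Da Db).2 hq1⟩, ⟨pt (β 0) 0, pt_mem Da Db _ _⟩),
        ⟨Or.inr ⟨_, _, rfl⟩, Sym2.mem_iff.2 (Or.inr (Subtype.ext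
          (((pt_eq_w_iff _ _).2 ⟨hq2, rfl⟩).symm)))⟩, ?_⟩
      rintro y ⟨hy1, hy2⟩
      rcases hchar y hy1 hy2 with ⟨hc, _⟩ | ⟨_, h, rfl⟩
      · exact absurd hc hp
      · rfl
  | w' =>
    unfold rcnt at hlast
    have key := exactly_one_of_two hlast
    have hchar := mem_ME_w' Da Db (α := α) (β := β) hmem
    rcases key with ⟨⟨hp1, hp2⟩, hq⟩ | ⟨hp, ⟨hq1, hq2⟩⟩
    · refine ⟨s(⟨GnV.a (Fin.last n), (a_mem_S Da Db).2 hp1⟩, ⟨pt (α (Fin.last n)) (Fin.last n), pt_mem Da Db _ _⟩),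
        ⟨Or.inl ⟨_, _, rfl⟩, Sym2.mem_iff.2 (Or.inr (Subtype.ext
          (((pt_eq_w'_iff _ _).2 ⟨hp2, rfl⟩).symm)))⟩, ?_⟩
      rintro y ⟨hy1, hy2⟩
      rcases hchar y hy1 hy2 with ⟨_, h, rfl⟩ | ⟨hc, _⟩
      · rfl
      · exact absurd hc hq
    · refine ⟨s(⟨GnV.b (Fin.last n), (b_mem_S Da Db).2 hq1⟩, ⟨pt (β (Fin.last n)) (Fin.last n), pt_mem Da Db _ _⟩),
        ⟨Or.inr ⟨_, _, rfl⟩, Sym2.mem_iff.2 (Or.inr (Subtype.ext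
          (((pt_eq_w'_iff _ _).2 ⟨hq2, rfl⟩).symm)))⟩, ?_⟩
      rintro y ⟨hy1, hy2⟩
      rcases hchar y hy1 hy2 with ⟨hc, _⟩ | ⟨_, h, rfl⟩
      · exact absurd hc hp
      · rfl


lemma pt_injx {x y : Bool} {j : Fin (n+1)} (h : pt x j = pt y j) : x = y := by
  cases x <;> cases y <;> simp [pt] at h ⊢
  · exact L_ne_R j h
  · exact L_ne_R j h.symm

lemma gen_ne {v1 w1 v2 w2 : GnV n} {p1 : v1 ∈ S Da Db} {q1 : w1 ∈ S Da Db}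
    {p2 : v2 ∈ S Da Db} {q2 : w2 ∈ S Da Db} (h12 : v1 ≠ v2) (h1w : v1 ≠ w2) :
    (s(⟨v1, p1⟩, ⟨w1, q1⟩) : Sym2 (S Da Db : Set (GnV n))) ≠ s(⟨v2, p2⟩, ⟨w2, q2⟩) := by
  intro h
  rcases Sym2.eq_iff.1 h with ⟨h1, h2⟩ | ⟨h1, h2⟩
  · exact h12 (congrArg Subtype.val h1)
  · exact h1w (congrArg Subtype.val h1)

lemma ME_injOn :
    Set.InjOn (fun p : (Fin (n+1) → Bool) × (Fin (n+1) → Bool) => ME Da Db p.1 p.2)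
      {p | Valid Da Db p.1 p.2} := by
  rintro ⟨α, β⟩ hp ⟨α', β'⟩ hp' h
  simp only [Set.mem_setOf_eq] at hp hp' h
  have hfa : ∀ j, α j = α' j := by
    intro j
    by_cases hj : j ∈ Da
    · rw [hp.1 j hj, hp'.1 j hj]
    · have hm : GnV.a j ∈ S Da Db := (a_mem_S Da Db).2 hj
      have hgen : (s(⟨GnV.a j, hm⟩, ⟨pt (α j) j, pt_mem Da Db _ _⟩) :
          Sym2 (S Da Db : Set (GnV n))) ∈ ME Da Db α' β' := by
        rw [← h]; exact Or.inl ⟨j, hm, rfl⟩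
      rcases hgen with ⟨j', h', he⟩ | ⟨j', h', he⟩
      · rcases Sym2.eq_iff.1 he with ⟨h1, h2⟩ | ⟨h1, h2⟩
        · obtain rfl : j = j' := by simpa using congrArg Subtype.val h1
          exact pt_injx (congrArg Subtype.val h2)
        · exact absurd (congrArg Subtype.val h1).symm (pt_ne_a _ _ _)
      · rcases Sym2.eq_iff.1 he with ⟨h1, h2⟩ | ⟨h1, h2⟩
        · exact absurd (congrArg Subtype.val h1) (by simp)
        · exact absurd (congrArg Subtype.val h1).symm (pt_ne_a _ _ _)
  have hfb : ∀ j, β j = β' j := by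
    intro j
    by_cases hj : j ∈ Db
    · rw [hp.2.1 j hj, hp'.2.1 j hj]
    · have hm : GnV.b j ∈ S Da Db := (b_mem_S Da Db).2 hj
      have hgen : (s(⟨GnV.b j, hm⟩, ⟨pt (β j) j, pt_mem Da Db _ _⟩) :
          Sym2 (S Da Db : Set (GnV n))) ∈ ME Da Db α' β' := by
        rw [← h]; exact Or.inr ⟨j, hm, rfl⟩
      rcases hgen with ⟨j', h', he⟩ | ⟨j', h', he⟩
      · rcases Sym2.eq_iff.1 he with ⟨h1, h2⟩ | ⟨h1, h2⟩
        · exact absurd (congrArg Subtype.val h1) (by simp)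
        · exact absurd (congrArg Subtype.val h1).symm (pt_ne_b _ _ _)
      · rcases Sym2.eq_iff.1 he with ⟨h1, h2⟩ | ⟨h1, h2⟩
        · obtain rfl : j = j' := by simpa using congrArg Subtype.val h1
          exact pt_injx (congrArg Subtype.val h2)
        · exact absurd (congrArg Subtype.val h1).symm (pt_ne_b _ _ _)
  exact Prod.ext (funext hfa) (funext hfb)


lemma exists_valid_of_mem {E' : Set (Sym2 (S Da Db : Set (GnV n)))} (hE : E' ∈ MSet Da Db) :
    ∃ p : (Fin (n+1) → Bool) × (Fin (n+1) → Bool),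
      Valid Da Db p.1 p.2 ∧ ME Da Db p.1 p.2 = E' := by
  classical
  obtain ⟨hsub, huniq⟩ := hE
  have edgeA : ∀ (j : Fin (n+1)) (hm : GnV.a j ∈ S Da Db), ∃ x : Bool,
      s(⟨GnV.a j, hm⟩, ⟨pt x j, pt_mem Da Db _ _⟩) ∈ E' := by
    intro j hm
    obtain ⟨e, ⟨he1, he2⟩, -⟩ := huniq ⟨GnV.a j, hm⟩
    obtain ⟨u, rfl⟩ := Sym2.mem_iff_exists.1 he2
    have hadj : (GnGraph n).Adj (GnV.a j) u.1 := (SimpleGraph.mem_edgeSet _).1 (hsub he1)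
    rcases (adj_a j u.1).1 hadj with h | h
    · refine ⟨false, ?_⟩
      have hu : u = ⟨pt false j, pt_mem Da Db false j⟩ := Subtype.ext h
      rw [← hu]; exact he1
    · refine ⟨true, ?_⟩
      have hu : u = ⟨pt true j, pt_mem Da Db true j⟩ := Subtype.ext h
      rw [← hu]; exact he1
  have edgeB : ∀ (j : Fin (n+1)) (hm : GnV.b j ∈ S Da Db), ∃ x : Bool,
      s(⟨GnV.b j, hm⟩, ⟨pt x j, pt_mem Da Db _ _⟩) ∈ E' := by
    intro j hm
    obtain ⟨e, ⟨he1, he2⟩, -⟩ := huniq ⟨GnV.b j, hm⟩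
    obtain ⟨u, rfl⟩ := Sym2.mem_iff_exists.1 he2
    have hadj : (GnGraph n).Adj (GnV.b j) u.1 := (SimpleGraph.mem_edgeSet _).1 (hsub he1)
    rcases (adj_b j u.1).1 hadj with h | h
    · refine ⟨false, ?_⟩
      have hu : u = ⟨pt false j, pt_mem Da Db false j⟩ := Subtype.ext h
      rw [← hu]; exact he1
    · refine ⟨true, ?_⟩
      have hu : u = ⟨pt true j, pt_mem Da Db true j⟩ := Subtype.ext h
      rw [← hu]; exact he1
  set α : Fin (n+1) → Bool := fun j =>
    decide (∃ hm : GnV.a j ∈ S Da Db, s(⟨GnV.a j, hm⟩, ⟨pt true j, pt_mem Da Db _ _⟩) ∈ E')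
    with hαdef
  set β : Fin (n+1) → Bool := fun j =>
    decide (∃ hm : GnV.b j ∈ S Da Db, s(⟨GnV.b j, hm⟩, ⟨pt true j, pt_mem Da Db _ _⟩) ∈ E')
    with hβdef
  have hAiff : ∀ j, α j = true ↔
      (∃ hm : GnV.a j ∈ S Da Db, s(⟨GnV.a j, hm⟩, ⟨pt true j, pt_mem Da Db _ _⟩) ∈ E') := by
    intro j; rw [hαdef]; exact decide_eq_true_iff
  have hBiff : ∀ j, β j = true ↔
      (∃ hm : GnV.b j ∈ S Da Db, s(⟨GnV.b j, hm⟩, ⟨pt true j, pt_mem Da Db _ _⟩) ∈ E') := by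
    intro j; rw [hβdef]; exact decide_eq_true_iff
  have keyA : ∀ (j : Fin (n+1)) (hm : GnV.a j ∈ S Da Db),
      s(⟨GnV.a j, hm⟩, ⟨pt (α j) j, pt_mem Da Db _ _⟩) ∈ E' := by
    intro j hm
    obtain ⟨x, hx⟩ := edgeA j hm
    cases x with
    | true =>
      have hh : α j = true := (hAiff j).2 ⟨hm, hx⟩
      rw [hh]; exact hx
    | false =>
      have hh : α j = false := by
        rw [Bool.eq_false_iff]
        intro htr
        obtain ⟨hm', hR⟩ := (hAiff j).1 htr
        have heq := (huniq ⟨GnV.a j, hm⟩).unique ⟨hR, Sym2.mem_mk_left _ _⟩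
          ⟨hx, Sym2.mem_mk_left _ _⟩
        have hpt : pt true j = pt false j := Subtype.ext_iff.1 (Sym2.congr_right.1 heq)
        exact absurd (pt_injx hpt) (by decide)
      rw [hh]; exact hx
  have keyB : ∀ (j : Fin (n+1)) (hm : GnV.b j ∈ S Da Db),
      s(⟨GnV.b j, hm⟩, ⟨pt (β j) j, pt_mem Da Db _ _⟩) ∈ E' := by
    intro j hm
    obtain ⟨x, hx⟩ := edgeB j hm
    cases x with
    | true =>
      have hh : β j = true := (hBiff j).2 ⟨hm, hx⟩
      rw [hh]; exact hx
    | false =>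
      have hh : β j = false := by
        rw [Bool.eq_false_iff]
        intro htr
        obtain ⟨hm', hR⟩ := (hBiff j).1 htr
        have heq := (huniq ⟨GnV.b j, hm⟩).unique ⟨hR, Sym2.mem_mk_left _ _⟩
          ⟨hx, Sym2.mem_mk_left _ _⟩
        have hpt : pt true j = pt false j := Subtype.ext_iff.1 (Sym2.congr_right.1 heq)
        exact absurd (pt_injx hpt) (by decide)
      rw [hh]; exact hx
  have hME : ME Da Db α β = E' := by
    apply Set.Subset.antisymm
    · rintro e (⟨j, hm, rfl⟩ | ⟨j, hm, rfl⟩)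
      · exact keyA j hm
      · exact keyB j hm
    · intro e
      induction e using Sym2.ind with
      | _ u v =>
        intro he
        have hadj : (GnGraph n).Adj u.1 v.1 := (SimpleGraph.mem_edgeSet _).1 (hsub he)
        rcases adj_struct hadj with ⟨j, h1 | h1⟩ | ⟨j, h1 | h1⟩
        · have hm : GnV.a j ∈ S Da Db := by rw [← h1]; exact u.2
          have hu : u = ⟨GnV.a j, hm⟩ := Subtype.ext h1
          subst hu
          have heq := (huniq ⟨GnV.a j, hm⟩).unique ⟨he, Sym2.mem_mk_left _ _⟩
            ⟨keyA j hm, Sym2.mem_mk_left _ _⟩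
          rw [heq]; exact Or.inl ⟨j, hm, rfl⟩
        · have hm : GnV.b j ∈ S Da Db := by rw [← h1]; exact u.2
          have hu : u = ⟨GnV.b j, hm⟩ := Subtype.ext h1
          subst hu
          have heq := (huniq ⟨GnV.b j, hm⟩).unique ⟨he, Sym2.mem_mk_left _ _⟩
            ⟨keyB j hm, Sym2.mem_mk_left _ _⟩
          rw [heq]; exact Or.inr ⟨j, hm, rfl⟩
        · have hm : GnV.a j ∈ S Da Db := by rw [← h1]; exact v.2
          have hv : v = ⟨GnV.a j, hm⟩ := Subtype.ext h1
          subst hv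
          have heq := (huniq ⟨GnV.a j, hm⟩).unique ⟨he, Sym2.mem_mk_right _ _⟩
            ⟨keyA j hm, Sym2.mem_mk_left _ _⟩
          rw [heq]; exact Or.inl ⟨j, hm, rfl⟩
        · have hm : GnV.b j ∈ S Da Db := by rw [← h1]; exact v.2
          have hv : v = ⟨GnV.b j, hm⟩ := Subtype.ext h1
          subst hv
          have heq := (huniq ⟨GnV.b j, hm⟩).unique ⟨he, Sym2.mem_mk_right _ _⟩
            ⟨keyB j hm, Sym2.mem_mk_left _ _⟩
          rw [heq]; exact Or.inr ⟨j, hm, rfl⟩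
  have hnormA : ∀ j ∈ Da, α j = false := by
    intro j hj
    rw [Bool.eq_false_iff]
    intro htr
    obtain ⟨hm, -⟩ := (hAiff j).1 htr
    exact ((a_mem_S Da Db).1 hm) hj
  have hnormB : ∀ j ∈ Db, β j = false := by
    intro j hj
    rw [Bool.eq_false_iff]
    intro htr
    obtain ⟨hm, -⟩ := (hBiff j).1 htr
    exact ((b_mem_S Da Db).1 hm) hj
  have hw : lcnt Da Db α β 0 = 1 := by
    obtain ⟨e, ⟨he1, he2⟩, -⟩ := huniq ⟨GnV.w, w_mem_S Da Db⟩
    have he1' : e ∈ ME Da Db α β := by rw [hME]; exact he1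
    have hd := mem_ME_w Da Db (α := α) (β := β) (w_mem_S Da Db) e he1' he2
    have hnot : ¬(((0:Fin (n+1)) ∉ Da ∧ α 0 = false) ∧ ((0:Fin (n+1)) ∉ Db ∧ β 0 = false)) := by
      rintro ⟨⟨hj1, hx1⟩, ⟨hj2, hx2⟩⟩
      have hA := keyA 0 ((a_mem_S Da Db).2 hj1)
      have hB := keyB 0 ((b_mem_S Da Db).2 hj2)
      have hwa : (⟨GnV.w, w_mem_S Da Db⟩ : (S Da Db : Set (GnV n))) ∈
          s(⟨GnV.a 0, (a_mem_S Da Db).2 hj1⟩, ⟨pt (α 0) 0, pt_mem Da Db _ _⟩) :=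
        Sym2.mem_iff.2 (Or.inr (Subtype.ext ((pt_eq_w_iff _ _).2 ⟨hx1, rfl⟩).symm))
      have hwb : (⟨GnV.w, w_mem_S Da Db⟩ : (S Da Db : Set (GnV n))) ∈
          s(⟨GnV.b 0, (b_mem_S Da Db).2 hj2⟩, ⟨pt (β 0) 0, pt_mem Da Db _ _⟩) :=
        Sym2.mem_iff.2 (Or.inr (Subtype.ext ((pt_eq_w_iff _ _).2 ⟨hx2, rfl⟩).symm))
      exact gen_ne Da Db (by simp) (Ne.symm (pt_ne_a _ _ _))
        ((huniq ⟨GnV.w, w_mem_S Da Db⟩).unique ⟨hA, hwa⟩ ⟨hB, hwb⟩)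
    rcases hd with ⟨hq, -⟩ | ⟨hq, -⟩
    · have hn2 : ¬((0:Fin (n+1)) ∉ Db ∧ β 0 = false) := fun h => hnot ⟨hq, h⟩
      unfold lcnt; rw [if_pos hq, if_neg hn2]
    · have hn1 : ¬((0:Fin (n+1)) ∉ Da ∧ α 0 = false) := fun h => hnot ⟨h, hq⟩
      unfold lcnt; rw [if_pos hq, if_neg hn1]
  have hw' : rcnt Da Db α β (Fin.last n) = 1 := by
    obtain ⟨e, ⟨he1, he2⟩, -⟩ := huniq ⟨GnV.w', w'_mem_S Da Db⟩
    have he1' : e ∈ ME Da Db α β := by rw [hME]; exact he1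
    have hd := mem_ME_w' Da Db (α := α) (β := β) (w'_mem_S Da Db) e he1' he2
    have hnot : ¬((Fin.last n ∉ Da ∧ α (Fin.last n) = true) ∧
        (Fin.last n ∉ Db ∧ β (Fin.last n) = true)) := by
      rintro ⟨⟨hj1, hx1⟩, ⟨hj2, hx2⟩⟩
      have hA := keyA _ ((a_mem_S Da Db).2 hj1)
      have hB := keyB _ ((b_mem_S Da Db).2 hj2)
      have hwa : (⟨GnV.w', w'_mem_S Da Db⟩ : (S Da Db : Set (GnV n))) ∈
          s(⟨GnV.a (Fin.last n), (a_mem_S Da Db).2 hj1⟩, ⟨pt (α (Fin.last n)) (Fin.last n), pt_mem Da Db _ _⟩) :=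
        Sym2.mem_iff.2 (Or.inr (Subtype.ext ((pt_eq_w'_iff _ _).2 ⟨hx1, rfl⟩).symm))
      have hwb : (⟨GnV.w', w'_mem_S Da Db⟩ : (S Da Db : Set (GnV n))) ∈
          s(⟨GnV.b (Fin.last n), (b_mem_S Da Db).2 hj2⟩, ⟨pt (β (Fin.last n)) (Fin.last n), pt_mem Da Db _ _⟩) :=
        Sym2.mem_iff.2 (Or.inr (Subtype.ext ((pt_eq_w'_iff _ _).2 ⟨hx2, rfl⟩).symm))
      exact gen_ne Da Db (by simp) (Ne.symm (pt_ne_a _ _ _))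
        ((huniq ⟨GnV.w', w'_mem_S Da Db⟩).unique ⟨hA, hwa⟩ ⟨hB, hwb⟩)
    rcases hd with ⟨hq, -⟩ | ⟨hq, -⟩
    · have hn2 : ¬(Fin.last n ∉ Db ∧ β (Fin.last n) = true) := fun h => hnot ⟨hq, h⟩
      unfold rcnt; rw [if_pos hq, if_neg hn2]
    · have hn1 : ¬(Fin.last n ∉ Da ∧ α (Fin.last n) = true) := fun h => hnot ⟨h, hq⟩
      unfold rcnt; rw [if_pos hq, if_neg hn1]
  have hc : ∀ i : Fin n, rcnt Da Db α β i.castSucc + lcnt Da Db α β i.succ = 1 := by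
    intro i
    obtain ⟨e, ⟨he1, he2⟩, -⟩ := huniq ⟨GnV.c i, c_mem_S Da Db⟩
    have he1' : e ∈ ME Da Db α β := by rw [hME]; exact he1
    have hd := mem_ME_c Da Db (α := α) (β := β) i (c_mem_S Da Db) e he1' he2
    have cne : GnV.a (n := n) i.castSucc ≠ GnV.a i.succ := by
      simp only [ne_eq, GnV.a.injEq]; exact (Fin.castSucc_lt_succ (i := i)).ne
    have cneb : GnV.b (n := n) i.castSucc ≠ GnV.b i.succ := by
      simp only [ne_eq, GnV.b.injEq]; exact (Fin.castSucc_lt_succ (i := i)).ne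
    have mA1 : ∀ h : i.castSucc ∉ Da, α i.castSucc = true →
        (⟨GnV.c i, c_mem_S Da Db⟩ : (S Da Db : Set (GnV n))) ∈
          s(⟨GnV.a i.castSucc, (a_mem_S Da Db).2 h⟩, ⟨pt (α i.castSucc) i.castSucc, pt_mem Da Db _ _⟩) :=
      fun _ hx => Sym2.mem_iff.2 (Or.inr (Subtype.ext ((pt_eq_c_iff _ _ _).2 (Or.inl ⟨hx, rfl⟩)).symm))
    have mB1 : ∀ h : i.castSucc ∉ Db, β i.castSucc = true →
        (⟨GnV.c i, c_mem_S Da Db⟩ : (S Da Db : Set (GnV n))) ∈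
          s(⟨GnV.b i.castSucc, (b_mem_S Da Db).2 h⟩, ⟨pt (β i.castSucc) i.castSucc, pt_mem Da Db _ _⟩) :=
      fun _ hx => Sym2.mem_iff.2 (Or.inr (Subtype.ext ((pt_eq_c_iff _ _ _).2 (Or.inl ⟨hx, rfl⟩)).symm))
    have mA2 : ∀ h : i.succ ∉ Da, α i.succ = false →
        (⟨GnV.c i, c_mem_S Da Db⟩ : (S Da Db : Set (GnV n))) ∈
          s(⟨GnV.a i.succ, (a_mem_S Da Db).2 h⟩, ⟨pt (α i.succ) i.succ, pt_mem Da Db _ _⟩) :=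
      fun _ hx => Sym2.mem_iff.2 (Or.inr (Subtype.ext ((pt_eq_c_iff _ _ _).2 (Or.inr ⟨hx, rfl⟩)).symm))
    have mB2 : ∀ h : i.succ ∉ Db, β i.succ = false →
        (⟨GnV.c i, c_mem_S Da Db⟩ : (S Da Db : Set (GnV n))) ∈
          s(⟨GnV.b i.succ, (b_mem_S Da Db).2 h⟩, ⟨pt (β i.succ) i.succ, pt_mem Da Db _ _⟩) :=
      fun _ hx => Sym2.mem_iff.2 (Or.inr (Subtype.ext ((pt_eq_c_iff _ _ _).2 (Or.inr ⟨hx, rfl⟩)).symm))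
    have h12 : ¬((i.castSucc ∉ Da ∧ α i.castSucc = true) ∧ (i.castSucc ∉ Db ∧ β i.castSucc = true)) := by
      rintro ⟨⟨ha1, ha2⟩, ⟨hb1, hb2⟩⟩
      exact gen_ne Da Db (by simp) (Ne.symm (pt_ne_a _ _ _))
        ((huniq ⟨GnV.c i, c_mem_S Da Db⟩).unique
          ⟨keyA _ ((a_mem_S Da Db).2 ha1), mA1 ha1 ha2⟩
          ⟨keyB _ ((b_mem_S Da Db).2 hb1), mB1 hb1 hb2⟩)
    have h13 : ¬((i.castSucc ∉ Da ∧ α i.castSucc = true) ∧ (i.succ ∉ Da ∧ α i.succ = false)) := by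
      rintro ⟨⟨ha1, ha2⟩, ⟨hb1, hb2⟩⟩
      exact gen_ne Da Db cne (Ne.symm (pt_ne_a _ _ _))
        ((huniq ⟨GnV.c i, c_mem_S Da Db⟩).unique
          ⟨keyA _ ((a_mem_S Da Db).2 ha1), mA1 ha1 ha2⟩
          ⟨keyA _ ((a_mem_S Da Db).2 hb1), mA2 hb1 hb2⟩)
    have h14 : ¬((i.castSucc ∉ Da ∧ α i.castSucc = true) ∧ (i.succ ∉ Db ∧ β i.succ = false)) := by
      rintro ⟨⟨ha1, ha2⟩, ⟨hb1, hb2⟩⟩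
      exact gen_ne Da Db (by simp) (Ne.symm (pt_ne_a _ _ _))
        ((huniq ⟨GnV.c i, c_mem_S Da Db⟩).unique
          ⟨keyA _ ((a_mem_S Da Db).2 ha1), mA1 ha1 ha2⟩
          ⟨keyB _ ((b_mem_S Da Db).2 hb1), mB2 hb1 hb2⟩)
    have h23 : ¬((i.castSucc ∉ Db ∧ β i.castSucc = true) ∧ (i.succ ∉ Da ∧ α i.succ = false)) := by
      rintro ⟨⟨ha1, ha2⟩, ⟨hb1, hb2⟩⟩
      exact gen_ne Da Db (by simp) (Ne.symm (pt_ne_b _ _ _))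
        ((huniq ⟨GnV.c i, c_mem_S Da Db⟩).unique
          ⟨keyB _ ((b_mem_S Da Db).2 ha1), mB1 ha1 ha2⟩
          ⟨keyA _ ((a_mem_S Da Db).2 hb1), mA2 hb1 hb2⟩)
    have h24 : ¬((i.castSucc ∉ Db ∧ β i.castSucc = true) ∧ (i.succ ∉ Db ∧ β i.succ = false)) := by
      rintro ⟨⟨ha1, ha2⟩, ⟨hb1, hb2⟩⟩
      exact gen_ne Da Db cneb (Ne.symm (pt_ne_b _ _ _))
        ((huniq ⟨GnV.c i, c_mem_S Da Db⟩).unique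
          ⟨keyB _ ((b_mem_S Da Db).2 ha1), mB1 ha1 ha2⟩
          ⟨keyB _ ((b_mem_S Da Db).2 hb1), mB2 hb1 hb2⟩)
    have h34 : ¬((i.succ ∉ Da ∧ α i.succ = false) ∧ (i.succ ∉ Db ∧ β i.succ = false)) := by
      rintro ⟨⟨ha1, ha2⟩, ⟨hb1, hb2⟩⟩
      exact gen_ne Da Db (by simp) (Ne.symm (pt_ne_a _ _ _))
        ((huniq ⟨GnV.c i, c_mem_S Da Db⟩).unique
          ⟨keyA _ ((a_mem_S Da Db).2 ha1), mA2 ha1 ha2⟩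
          ⟨keyB _ ((b_mem_S Da Db).2 hb1), mB2 hb1 hb2⟩)
    unfold rcnt lcnt
    rcases hd with ⟨hq, -⟩ | ⟨hq, -⟩ | ⟨hq, -⟩ | ⟨hq, -⟩
    · rw [if_pos hq, if_neg (fun h => h12 ⟨hq, h⟩), if_neg (fun h => h13 ⟨hq, h⟩),
        if_neg (fun h => h14 ⟨hq, h⟩)]
    · rw [if_neg (fun h => h12 ⟨h, hq⟩), if_pos hq, if_neg (fun h => h23 ⟨hq, h⟩),
        if_neg (fun h => h24 ⟨hq, h⟩)]
    · rw [if_neg (fun h => h13 ⟨h, hq⟩), if_neg (fun h => h23 ⟨h, hq⟩), if_pos hq,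
        if_neg (fun h => h34 ⟨hq, h⟩)]
    · rw [if_neg (fun h => h14 ⟨h, hq⟩), if_neg (fun h => h24 ⟨h, hq⟩),
        if_neg (fun h => h34 ⟨h, hq⟩), if_pos hq]
  exact ⟨(α, β), ⟨hnormA, hnormB, hw, hw', hc⟩, hME⟩


lemma MSet_eq_image : MSet Da Db =
    (fun p : (Fin (n+1) → Bool) × (Fin (n+1) → Bool) => ME Da Db p.1 p.2) ''
      {p | Valid Da Db p.1 p.2} := by
  apply Set.Subset.antisymm
  · intro E' hE
    obtain ⟨p, hv, hme⟩ := exists_valid_of_mem Da Db hE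
    exact ⟨p, hv, hme⟩
  · rintro _ ⟨p, hv, rfl⟩
    exact ME_mem_MSet Da Db hv

lemma MSet_ncard : (MSet Da Db).ncard = {p : (Fin (n+1) → Bool) × (Fin (n+1) → Bool) |
    Valid Da Db p.1 p.2}.ncard := by
  rw [MSet_eq_image]
  exact Set.ncard_image_of_injOn (ME_injOn Da Db)

/-! ## Counting -/

variable (t : Fin (n+1) → ℤ)

def PS (j : Fin (n+1)) : ℤ := ∑ x ∈ Finset.Iio j, t x

lemma PS_zero : PS t 0 = 0 := by
  rw [PS]
  have : Finset.Iio (0 : Fin (n+1)) = ∅ := by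
    ext x; simp [Fin.lt_def]
  rw [this, Finset.sum_empty]

lemma Iio_succ_eq (i : Fin n) :
    Finset.Iio (i.succ : Fin (n+1)) = insert i.castSucc (Finset.Iio i.castSucc) := by
  ext x
  simp only [Finset.mem_Iio, Finset.mem_insert, Fin.lt_def, Fin.ext_iff, Fin.val_succ,
    Fin.coe_castSucc]
  omega

lemma Iic_eq (m : Fin (n+1)) : Finset.Iic m = insert m (Finset.Iio m) := by
  ext x
  simp only [Finset.mem_Iic, Finset.mem_insert, Finset.mem_Iio, le_iff_lt_or_eq]
  tauto

lemma PS_succ (i : Fin n) : PS t i.succ = t i.castSucc + PS t i.castSucc := by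
  rw [PS, Iio_succ_eq, Finset.sum_insert (fun h => absurd (Finset.mem_Iio.1 h) (lt_irrefl _))]
  rfl

lemma sum_Iic (m : Fin (n+1)) : ∑ x ∈ Finset.Iic m, t x = t m + PS t m := by
  rw [Iic_eq, Finset.sum_insert (fun h => absurd (Finset.mem_Iio.1 h) (lt_irrefl _))]
  rfl

lemma sum_Iic_last : ∑ x ∈ Finset.Iic (Fin.last n), t x = ∑ x, t x := by
  congr 1
  ext x
  simp [Fin.le_last]

variable (ht : ∀ j, t j = (if j ∈ Da then 0 else 1) + (if j ∈ Db then 0 else 1) - 1)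

include ht in
lemma lcnt_add_rcnt (α β : Fin (n+1) → Bool) (j : Fin (n+1)) :
    ((lcnt Da Db α β j : ℤ) + (rcnt Da Db α β j : ℤ)) = t j + 1 := by
  rw [ht j]
  unfold lcnt rcnt
  by_cases h1 : j ∈ Da <;> by_cases h2 : j ∈ Db <;> cases hα : α j <;> cases hβ : β j <;>
    simp [h1, h2, hα, hβ]

include ht in
lemma valid_lcnt {α β : Fin (n+1) → Bool} (hv : Valid Da Db α β) :
    ∀ j, (lcnt Da Db α β j : ℤ) = 1 - PS t j := by
  obtain ⟨-, -, h0, -, hmid⟩ := hv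
  intro j
  induction j using Fin.induction with
  | zero => rw [h0, PS_zero]; norm_num
  | succ i ih =>
    have h1 := hmid i
    have h2 := lcnt_add_rcnt Da Db t ht α β i.castSucc
    rw [PS_succ]
    have : ((rcnt Da Db α β i.castSucc : ℤ)) + (lcnt Da Db α β i.succ : ℤ) = 1 := by
      exact_mod_cast congrArg (Nat.cast : ℕ → ℤ) h1
    omega

include ht in
lemma valid_sum_Iic {α β : Fin (n+1) → Bool} (hv : Valid Da Db α β) (m : Fin (n+1)) :
    (∑ x ∈ Finset.Iic m, t x) = (rcnt Da Db α β m : ℤ) := by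
  have h1 := valid_lcnt Da Db t ht hv m
  have h2 := lcnt_add_rcnt Da Db t ht α β m
  rw [sum_Iic]
  omega

include ht in
lemma valid_cond {α β : Fin (n+1) → Bool} (hv : Valid Da Db α β) :
    (∀ m : Fin (n+1), (∑ x ∈ Finset.Iic m, t x) = 0 ∨ (∑ x ∈ Finset.Iic m, t x) = 1) ∧
      (∑ x, t x) = 1 := by
  constructor
  · intro m
    rcases Fin.eq_castSucc_or_eq_last m with ⟨i, rfl⟩ | rfl
    · have h1 := hv.2.2.2.2 i
      have h2 := valid_sum_Iic Da Db t ht hv i.castSucc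
      have : rcnt Da Db α β i.castSucc ≤ 1 := by omega
      interval_cases h : rcnt Da Db α β i.castSucc <;> simp [h] at h2 <;> omega
    · right
      rw [valid_sum_Iic Da Db t ht hv, hv.2.2.2.1]
      norm_num
  · rw [← sum_Iic_last, valid_sum_Iic Da Db t ht hv, hv.2.2.2.1]
    norm_num


def Col (j : Fin (n+1)) (x : Bool × Bool) : Prop :=
  (j ∈ Da → x.1 = false) ∧ (j ∈ Db → x.2 = false) ∧
  ((((if j ∉ Da ∧ x.1 = false then 1 else 0) + (if j ∉ Db ∧ x.2 = false then 1 else 0) : ℕ) : ℤ)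
    = 1 - PS t j)

include ht in
lemma valid_iff_col (htot : ∑ x, t x = 1) (α β : Fin (n+1) → Bool) :
    Valid Da Db α β ↔ ∀ j, Col Da Db t j (α j, β j) := by
  constructor
  · intro hv j
    refine ⟨fun hj => hv.1 j hj, fun hj => hv.2.1 j hj, ?_⟩
    exact valid_lcnt Da Db t ht hv j
  · intro hcol
    have hl : ∀ j, (lcnt Da Db α β j : ℤ) = 1 - PS t j := fun j => (hcol j).2.2
    refine ⟨fun j hj => (hcol j).1 hj, fun j hj => (hcol j).2.1 hj, ?_, ?_, ?_⟩
    · have h1 := hl 0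
      rw [PS_zero] at h1
      omega
    · have h1 := hl (Fin.last n)
      have h2 := lcnt_add_rcnt Da Db t ht α β (Fin.last n)
      have h3 : t (Fin.last n) + PS t (Fin.last n) = 1 := by
        rw [← sum_Iic, sum_Iic_last, htot]
      omega
    · intro i
      have h1 := hl i.castSucc
      have h2 := hl i.succ
      have h3 := lcnt_add_rcnt Da Db t ht α β i.castSucc
      have h4 := PS_succ t i
      omega

lemma PS_mem (hcond : ∀ m : Fin (n+1),
      (∑ x ∈ Finset.Iic m, t x) = 0 ∨ (∑ x ∈ Finset.Iic m, t x) = 1) (j : Fin (n+1)) :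
    PS t j = 0 ∨ PS t j = 1 := by
  rcases Fin.eq_zero_or_eq_succ j with rfl | ⟨i, rfl⟩
  · left; exact PS_zero t
  · rw [PS_succ, ← sum_Iic]
    exact hcond i.castSucc

include ht in
lemma col_card
    (hcond : ∀ m : Fin (n+1),
      (∑ x ∈ Finset.Iic m, t x) = 0 ∨ (∑ x ∈ Finset.Iic m, t x) = 1)
    (j : Fin (n+1)) :
    Nat.card {x : Bool × Bool // Col Da Db t j x} = if t j = 1 then 2 else 1 := by
  classical
  have hPS := PS_mem t hcond j
  have hS : t j + PS t j = 0 ∨ t j + PS t j = 1 := by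
    rw [← sum_Iic]; exact hcond j
  rw [show Nat.card {x : Bool × Bool // Col Da Db t j x} =
      {x : Bool × Bool | Col Da Db t j x}.ncard from Nat.card_coe_set_eq _]
  by_cases hda : j ∈ Da <;> by_cases hdb : j ∈ Db
  · have htj : t j = -1 := by rw [ht j]; simp [hda, hdb]
    have hPS1 : PS t j = 1 := by omega
    rw [if_neg (by omega)]
    have hset : {x : Bool × Bool | Col Da Db t j x} = {(false, false)} := by
      ext ⟨x1, x2⟩
      cases x1 <;> cases x2 <;>
        simp [Col, hda, hdb, hPS1]
    rw [hset, Set.ncard_singleton]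
  · have htj : t j = 0 := by rw [ht j]; simp [hda, hdb]
    rw [if_neg (by omega)]
    rcases hPS with hPS | hPS
    · have hset : {x : Bool × Bool | Col Da Db t j x} = {(false, false)} := by
        ext ⟨x1, x2⟩
        cases x1 <;> cases x2 <;> simp [Col, hda, hdb, hPS]
      rw [hset, Set.ncard_singleton]
    · have hset : {x : Bool × Bool | Col Da Db t j x} = {(false, true)} := by
        ext ⟨x1, x2⟩
        cases x1 <;> cases x2 <;> simp [Col, hda, hdb, hPS]
      rw [hset, Set.ncard_singleton]
  · have htj : t j = 0 := by rw [ht j]; simp [hda, hdb]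
    rw [if_neg (by omega)]
    rcases hPS with hPS | hPS
    · have hset : {x : Bool × Bool | Col Da Db t j x} = {(false, false)} := by
        ext ⟨x1, x2⟩
        cases x1 <;> cases x2 <;> simp [Col, hda, hdb, hPS]
      rw [hset, Set.ncard_singleton]
    · have hset : {x : Bool × Bool | Col Da Db t j x} = {(true, false)} := by
        ext ⟨x1, x2⟩
        cases x1 <;> cases x2 <;> simp [Col, hda, hdb, hPS]
      rw [hset, Set.ncard_singleton]
  · have htj : t j = 1 := by rw [ht j]; simp [hda, hdb]
    rw [if_pos htj]
    have hPS0 : PS t j = 0 := by omega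
    have hset : {x : Bool × Bool | Col Da Db t j x} = {(false, true), (true, false)} := by
      ext ⟨x1, x2⟩
      cases x1 <;> cases x2 <;> simp [Col, hda, hdb, hPS0]
    rw [hset, Set.ncard_pair (by decide)]

include ht in
lemma valid_card
    (hcond : ∀ m : Fin (n+1),
      (∑ x ∈ Finset.Iic m, t x) = 0 ∨ (∑ x ∈ Finset.Iic m, t x) = 1)
    (htot : ∑ x, t x = 1) :
    {p : (Fin (n+1) → Bool) × (Fin (n+1) → Bool) | Valid Da Db p.1 p.2}.ncard =
      2 ^ (Finset.univ.filter fun j => t j = 1).card := by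
  classical
  rw [← Nat.card_coe_set_eq]
  have e1 : {p : (Fin (n+1) → Bool) × (Fin (n+1) → Bool) | Valid Da Db p.1 p.2} =
      {p : (Fin (n+1) → Bool) × (Fin (n+1) → Bool) | ∀ j, Col Da Db t j (p.1 j, p.2 j)} := by
    ext p
    exact valid_iff_col Da Db t ht htot p.1 p.2
  rw [e1]
  have E1 : {p : (Fin (n+1) → Bool) × (Fin (n+1) → Bool) //
        ∀ j, Col Da Db t j (p.1 j, p.2 j)} ≃
      {f : Fin (n+1) → Bool × Bool // ∀ j, Col Da Db t j (f j)} :=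
    (Equiv.arrowProdEquivProdArrow (Fin (n+1)) (fun _ => Bool) (fun _ => Bool)).symm.subtypeEquiv
      (fun p => Iff.rfl)
  have E2 : {f : Fin (n+1) → Bool × Bool // ∀ j, Col Da Db t j (f j)} ≃
      ∀ j, {x : Bool × Bool // Col Da Db t j x} := Equiv.subtypePiEquivPi
  have hcard : Nat.card {p : (Fin (n+1) → Bool) × (Fin (n+1) → Bool) //
      ∀ j, Col Da Db t j (p.1 j, p.2 j)} = ∏ j, Nat.card {x : Bool × Bool // Col Da Db t j x} := by
    rw [Nat.card_congr (E1.trans E2), Nat.card_pi]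
  rw [show Nat.card {p : (Fin (n+1) → Bool) × (Fin (n+1) → Bool) |
      ∀ j, Col Da Db t j (p.1 j, p.2 j)} = Nat.card {p : (Fin (n+1) → Bool) × (Fin (n+1) → Bool) //
      ∀ j, Col Da Db t j (p.1 j, p.2 j)} from rfl, hcard]
  rw [Finset.prod_congr rfl (fun j _ => col_card Da Db t ht hcond j)]
  rw [Finset.prod_ite, Finset.prod_const, Finset.prod_const_one, mul_one]

include ht in
lemma valid_empty
    (hcond : ¬((∀ m : Fin (n+1),
        (∑ x ∈ Finset.Iic m, t x) = 0 ∨ (∑ x ∈ Finset.Iic m, t x) = 1) ∧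
      (∑ x, t x) = 1)) :
    {p : (Fin (n+1) → Bool) × (Fin (n+1) → Bool) | Valid Da Db p.1 p.2}.ncard = 0 := by
  have hempty : {p : (Fin (n+1) → Bool) × (Fin (n+1) → Bool) | Valid Da Db p.1 p.2} = ∅ :=
    Set.eq_empty_iff_forall_notMem.2 fun p hp => hcond (valid_cond Da Db t ht hp)
  rw [hempty, Set.ncard_empty]

end GnAux


/-- Let `D` be a subset of the distinguished vertices of `Gₙ`, recorded by the index
sets `Da = {j | a j ∈ D}` and `Db = {j | b j ∈ D}`.  With `t j = 1` if neither `a j` nor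
`b j` lies in `D`, `t j = −1` if both do, and `t j = 0` if exactly one does, the number
of perfect matchings of `Gₙ − D` is `2^{#{j | t j = 1}}` if every partial sum of
`(t 0, …, t n)` is `0` or `1` and the total sum is `1`, and `0` otherwise. -/
theorem Gn_matchings (n : ℕ) (hn : 1 ≤ n)
    (Da Db : Finset (Fin (n + 1)))
    (t : Fin (n + 1) → ℤ)
    (ht : ∀ j, t j = (if j ∈ Da then 0 else 1) + (if j ∈ Db then 0 else 1) - 1) :
    numPM ((GnGraph n).induce
        {v | ¬ ((∃ j ∈ Da, v = GnV.a j) ∨ (∃ j ∈ Db, v = GnV.b j))}) =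
      if (∀ m : Fin (n + 1),
            (∑ x ∈ Finset.Iic m, t x) = 0 ∨ (∑ x ∈ Finset.Iic m, t x) = 1) ∧
          (∑ x, t x) = 1
      then 2 ^ (Finset.univ.filter fun j => t j = 1).card
      else 0 := by
  rw [show numPM ((GnGraph n).induce
      {v | ¬ ((∃ j ∈ Da, v = GnV.a j) ∨ (∃ j ∈ Db, v = GnV.b j))}) =
      (GnAux.MSet Da Db).ncard from rfl, GnAux.MSet_ncard]
  split_ifs with hcond
  · exact GnAux.valid_card Da Db t ht hcond.1 hcond.2
  · exact GnAux.valid_empty Da Db t ht hcond
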